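/- For any m×m positive semidefinite Hermitian matrix A and any subsets I, J of {1,...,m}, det A[I∪J] · det A[I∩J] ≤ det A[I] · det A[J], where A[K] denotes the principal submatrix of A with rows and columns indexed by K, and det A[∅] := 1. -/

import Mathlib

open Matrix
open scoped ComplexOrder

/-- The principal minor of `A` on the index set `I` (determinant of the
principal submatrix of `A` with rows and columns in `I`); for `I = ∅` it is `1`. -/
noncomputable def pminor {m : ℕ} (A : Matrix (Fin m) (Fin m) ℂ) (I : Finset (Fin m)) : ℂ :=
  (A.submatrix (fun i : I => (i : Fin m)) (fun i : I => (i : Fin m))).det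

section AuxKoteljanskii

set_option linter.unusedSectionVars false

variable {n : Type*} [Fintype n] [DecidableEq n]

lemma posDef_of_det_ne_zero {P : Matrix n n ℂ} (hP : P.PosSemidef) (hd : P.det ≠ 0) :
    P.PosDef := by
  refine posDef_iff_dotProduct_mulVec.2 ⟨hP.1, fun x hx => lt_of_le_of_ne (hP.dotProduct_mulVec_nonneg x) fun h => hx ?_⟩
  have h0 : P *ᵥ x = 0 := (hP.dotProduct_mulVec_zero_iff x).1 h.symm
  have hinj : Function.Injective (P.mulVec) :=
    Matrix.mulVec_injective_iff_isUnit.2 ((Matrix.isUnit_iff_isUnit_det P).2 hd.isUnit)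
  exact hinj (show P *ᵥ x = P *ᵥ 0 by simp [h0])

lemma posDef_submatrix_inj {m : Type*} [Fintype m] [DecidableEq m] {M : Matrix n n ℂ}
    (hM : M.PosDef) {e : m → n} (he : Function.Injective e) : (M.submatrix e e).PosDef := by
  set P : Matrix n m ℂ := (1 : Matrix n n ℂ).submatrix id e with hP
  have hEq : M.submatrix e e = Pᴴ * M * P := by
    ext i j
    simp [P, Matrix.mul_apply, Matrix.one_apply, Finset.sum_ite_eq, eq_comm]
  refine posDef_iff_dotProduct_mulVec.2 ⟨(hM.posSemidef.submatrix e).1, fun x hx => ?_⟩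
  have hy : P *ᵥ x ≠ 0 := by
    intro h
    apply hx
    funext j
    have := congrFun h (e j)
    simp only [Matrix.mulVec, dotProduct, hP, Matrix.submatrix_apply, id_eq,
      Matrix.one_apply, Pi.zero_apply] at this ⊢
    rwa [Finset.sum_eq_single j
      (fun b _ hb => by rw [if_neg (fun hh => hb (he hh.symm)), zero_mul]) (by simp),
      if_pos rfl, one_mul] at this
  have h := hM.dotProduct_mulVec_pos hy
  rw [hEq]
  calc (0:ℂ) < star (P *ᵥ x) ⬝ᵥ M *ᵥ (P *ᵥ x) := h
  _ = star x ⬝ᵥ (Pᴴ * M * P) *ᵥ x := by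
      simp only [Matrix.dotProduct_mulVec, Matrix.star_mulVec, ← Matrix.vecMul_vecMul]

lemma one_le_det_one_add {S : Matrix n n ℂ} (hS : S.PosSemidef) :
    (1 : ℂ) ≤ (1 + S).det := by
  have hH := hS.1
  have hspec := hH.spectral_theorem
  set U : Matrix n n ℂ := (hH.eigenvectorUnitary : Matrix n n ℂ) with hU
  have hUU : U * star U = 1 := (Matrix.mem_unitaryGroup_iff).mp hH.eigenvectorUnitary.2
  have hspec' : S = U * diagonal (RCLike.ofReal ∘ hH.eigenvalues) * star U :=
    hspec.trans (by simp only [Unitary.conjStarAlgAut_apply, Unitary.coe_star, hU])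
  have h1 : (1 : Matrix n n ℂ) + S = U * (1 + diagonal (RCLike.ofReal ∘ hH.eigenvalues)) * star U := by
    rw [mul_add, add_mul, Matrix.mul_one, hUU, ← hspec']
  have hdetU : U.det * (star U).det = 1 := by
    rw [← Matrix.det_mul, hUU, Matrix.det_one]
  have h2 : (1 + S).det = ∏ i, (1 + (hH.eigenvalues i : ℂ)) := by
    rw [h1, Matrix.det_mul, Matrix.det_mul,
      mul_right_comm, hdetU, one_mul]
    rw [show (1 : Matrix n n ℂ) = diagonal (fun _ => 1) from (Matrix.diagonal_one).symm,
      Matrix.diagonal_add, Matrix.det_diagonal]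
    rfl
  rw [h2]
  calc (1:ℂ) = ∏ _i : n, (1:ℂ) := by simp
  _ ≤ ∏ i, (1 + (hH.eigenvalues i : ℂ)) := by
    refine Finset.prod_le_prod (fun i _ => zero_le_one) fun i _ => ?_
    have h4 : (0:ℂ) ≤ ((hH.eigenvalues i : ℝ) : ℂ) := RCLike.ofReal_nonneg.2 (hS.eigenvalues_nonneg i)
    exact le_add_of_nonneg_right h4

lemma posSemidef_det_nonneg {P : Matrix n n ℂ} (hP : P.PosSemidef) : 0 ≤ P.det := by
  rw [hP.1.det_eq_prod_eigenvalues]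
  exact Finset.prod_nonneg fun i _ => RCLike.ofReal_nonneg.2 (hP.eigenvalues_nonneg i)

open scoped MatrixOrder in
lemma det_le_det_add {P W : Matrix n n ℂ} (hP : P.PosSemidef) (hW : W.PosSemidef) :
    P.det ≤ (P + W).det := by
  by_cases hd : P.det = 0
  · rw [hd]; exact posSemidef_det_nonneg (hP.add hW)
  · have hPd : P.PosDef := posDef_of_det_ne_zero hP hd
    set R := CFC.sqrt P with hRdef
    have hR : R.PosSemidef := (CFC.sqrt_nonneg P).posSemidef
    have hRR : R * R = P := CFC.sqrt_mul_sqrt_self P hP.nonneg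
    have hdetR : R.det * R.det = P.det := by rw [← Matrix.det_mul, hRR]
    have hu : IsUnit R.det := by
      refine isUnit_of_mul_isUnit_left (y := R.det) ?_
      rw [hdetR]; exact (Ne.isUnit hd)
    set S := R⁻¹ * W * R⁻¹ with hSdef
    have hSps : S.PosSemidef := by
      have h := hW.conjTranspose_mul_mul_same (B := R⁻¹)
      rwa [(Matrix.IsHermitian.inv hR.1 : (R⁻¹)ᴴ = R⁻¹)] at h
    have hfact : P + W = R * (1 + S) * R := by
      rw [mul_add, add_mul, Matrix.mul_one, hRR, hSdef]
      congr 1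
      rw [show R * (R⁻¹ * W * R⁻¹) * R = R * R⁻¹ * W * (R⁻¹ * R) by
        simp only [Matrix.mul_assoc],
        Matrix.mul_nonsing_inv _ hu, Matrix.nonsing_inv_mul _ hu, Matrix.one_mul,
        Matrix.mul_one]
    have hdet : (P + W).det = P.det * (1 + S).det := by
      rw [hfact, Matrix.det_mul, Matrix.det_mul]
      rw [← hdetR]; ring
    rw [hdet]
    exact le_mul_of_one_le_right hPd.det_pos.le (one_le_det_one_add hSps)

section Blocks
variable {α β : Type*} [Fintype α] [DecidableEq α] [Fintype β] [DecidableEq β]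

lemma submatrix_mul_left {p q r p' r' : Type*} [Fintype q]
    (X : Matrix p q ℂ) (Y : Matrix q r ℂ) (f : p' → p) (g : r' → r) :
    (X * Y).submatrix f g = X.submatrix f id * Y.submatrix id g := by
  ext i j; simp [Matrix.mul_apply]

lemma toBlocks21_eq {M : Matrix (α ⊕ β) (α ⊕ β) ℂ} (hM : M.IsHermitian) :
    M.toBlocks₂₁ = (M.toBlocks₁₂)ᴴ := by
  ext i j
  exact (hM.apply (Sum.inr i) (Sum.inl j)).symm

lemma fischer (M : Matrix (α ⊕ β) (α ⊕ β) ℂ) (hM : M.PosDef) :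
    M.det ≤ (M.toBlocks₁₁).det * (M.toBlocks₂₂).det := by
  set A := M.toBlocks₁₁ with hAdef
  set B := M.toBlocks₁₂ with hBdef
  set D := M.toBlocks₂₂ with hDdef
  have hA : A.PosDef := posDef_submatrix_inj hM Sum.inl_injective
  haveI : Invertible A := Matrix.invertibleOfIsUnitDet A hA.det_pos.ne'.isUnit
  have hfb : Matrix.fromBlocks A B Bᴴ D = M := by
    rw [← toBlocks21_eq hM.1, hAdef, hBdef, hDdef, Matrix.fromBlocks_toBlocks]
  have hdet : M.det = A.det * (D - Bᴴ * A⁻¹ * B).det := by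
    rw [← hfb, Matrix.det_fromBlocks₁₁, Matrix.invOf_eq_nonsing_inv]
  have hSps : (D - Bᴴ * A⁻¹ * B).PosSemidef :=
    (Matrix.PosDef.fromBlocks₁₁ B D hA).1 (hfb ▸ hM.posSemidef)
  have hW : (Bᴴ * A⁻¹ * B).PosSemidef := hA.inv.posSemidef.conjTranspose_mul_mul_same B
  calc M.det = A.det * (D - Bᴴ * A⁻¹ * B).det := hdet
  _ ≤ A.det * D.det := by
      refine mul_le_mul_of_nonneg_left ?_ hA.det_pos.le
      have h := det_le_det_add hSps hW
      rwa [sub_add_cancel] at h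

lemma block_det {γ κ : Type*} [Fintype γ] [DecidableEq γ] [Fintype κ] [DecidableEq κ]
    (M : Matrix (γ ⊕ (α ⊕ β)) (γ ⊕ (α ⊕ β)) ℂ) (hM : M.PosDef)
    (u : κ → α ⊕ β) :
    (M.submatrix (Sum.map id u) (Sum.map id u)).det =
      (M.toBlocks₁₁).det *
      (((M.toBlocks₂₂ - (M.toBlocks₁₂)ᴴ * (M.toBlocks₁₁)⁻¹ * M.toBlocks₁₂)).submatrix u u).det := by
  set A := M.toBlocks₁₁ with hAdef
  set B := M.toBlocks₁₂ with hBdef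
  set D := M.toBlocks₂₂ with hDdef
  have hA : A.PosDef := posDef_submatrix_inj hM Sum.inl_injective
  haveI : Invertible A := Matrix.invertibleOfIsUnitDet A hA.det_pos.ne'.isUnit
  have hblock : M.submatrix (Sum.map id u) (Sum.map id u) =
      Matrix.fromBlocks A (B.submatrix id u) ((B.submatrix id u)ᴴ) (D.submatrix u u) := by
    ext i j
    rcases i with i | i <;> rcases j with j | j
    · rfl
    · rfl
    · exact (hM.1.apply _ _).symm
    · rfl
  have h1 : (Bᴴ * A⁻¹ * B).submatrix u u =
      (B.submatrix id u)ᴴ * A⁻¹ * B.submatrix id u := by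
    rw [submatrix_mul_left (Bᴴ * A⁻¹) B u u, submatrix_mul_left Bᴴ A⁻¹ u id,
      Matrix.submatrix_id_id, ← Matrix.conjTranspose_submatrix]
  have h2 : (D - Bᴴ * A⁻¹ * B).submatrix u u =
      D.submatrix u u - (B.submatrix id u)ᴴ * A⁻¹ * B.submatrix id u := by
    rw [← h1]; ext i j; simp
  rw [hblock, Matrix.det_fromBlocks₁₁, Matrix.invOf_eq_nonsing_inv, h2]

lemma core {γ : Type*} [Fintype γ] [DecidableEq γ]
    (M : Matrix (γ ⊕ (α ⊕ β)) (γ ⊕ (α ⊕ β)) ℂ) (hM : M.PosDef) :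
    M.det * (M.submatrix Sum.inl Sum.inl).det ≤
      (M.submatrix (Sum.map id Sum.inl) (Sum.map id Sum.inl)).det *
      (M.submatrix (Sum.map id Sum.inr) (Sum.map id Sum.inr)).det := by
  set A := M.toBlocks₁₁ with hAdef
  set B := M.toBlocks₁₂ with hBdef
  set D := M.toBlocks₂₂ with hDdef
  have hA : A.PosDef := posDef_submatrix_inj hM Sum.inl_injective
  haveI : Invertible A := Matrix.invertibleOfIsUnitDet A hA.det_pos.ne'.isUnit
  set C := D - Bᴴ * A⁻¹ * B with hCdef
  have hdetM : M.det = A.det * C.det := by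
    have h := block_det M hM (id : α ⊕ β → α ⊕ β)
    simpa using h
  have hCps : C.PosSemidef := by
    have hfb : Matrix.fromBlocks A B Bᴴ D = M := by
      rw [← toBlocks21_eq hM.1, hAdef, hBdef, hDdef, Matrix.fromBlocks_toBlocks]
    exact (Matrix.PosDef.fromBlocks₁₁ B D hA).1 (hfb ▸ hM.posSemidef)
  have hCpd : C.PosDef := by
    refine posDef_of_det_ne_zero hCps fun h => ?_
    rw [h, mul_zero] at hdetM
    exact hM.det_pos.ne' hdetM
  have hfis : C.det ≤ (C.submatrix Sum.inl Sum.inl).det * (C.submatrix Sum.inr Sum.inr).det :=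
    fischer C hCpd
  have h1 := block_det M hM (Sum.inl : α → α ⊕ β)
  have h2 := block_det M hM (Sum.inr : β → α ⊕ β)
  rw [h1, h2, hdetM]
  have hMsub : M.submatrix (Sum.inl : γ → γ ⊕ (α ⊕ β)) Sum.inl = A := rfl
  rw [hMsub]
  have hAd : (0:ℂ) ≤ A.det * A.det := mul_nonneg hA.det_pos.le hA.det_pos.le
  calc A.det * C.det * A.det = (A.det * A.det) * C.det := by ring
  _ ≤ (A.det * A.det) * ((C.submatrix Sum.inl Sum.inl).det * (C.submatrix Sum.inr Sum.inr).det) :=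
      mul_le_mul_of_nonneg_left hfis hAd
  _ = A.det * (C.submatrix Sum.inl Sum.inl).det * (A.det * (C.submatrix Sum.inr Sum.inr).det) := by
      ring
end Blocks

lemma pminor_eq_det {m : ℕ} (A : Matrix (Fin m) (Fin m) ℂ) (T : Finset (Fin m))
    {κ : Type*} [Fintype κ] [DecidableEq κ] (u : κ → Fin m)
    (hinj : Function.Injective u) (hmem : ∀ k, u k ∈ T) (hsurj : ∀ t ∈ T, ∃ k, u k = t) :
    pminor A T = (A.submatrix u u).det := by
  have hbij : Function.Bijective (fun k => (⟨u k, hmem k⟩ : {x // x ∈ T})) := by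
    constructor
    · intro a b hab
      exact hinj (congrArg Subtype.val hab)
    · rintro ⟨t, ht⟩
      obtain ⟨k, hk⟩ := hsurj t ht
      exact ⟨k, Subtype.ext hk⟩
  let e := Equiv.ofBijective _ hbij
  have : A.submatrix u u =
      (A.submatrix (fun i : T => (i : Fin m)) (fun i : T => (i : Fin m))).submatrix e e := by
    rw [Matrix.submatrix_submatrix]
    rfl
  rw [pminor, ← Matrix.det_submatrix_equiv_self e, this]

theorem det_principal_submodular_posdef {m : ℕ} (A : Matrix (Fin m) (Fin m) ℂ)
    (hA : A.PosDef) (I J : Finset (Fin m)) :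
    pminor A (I ∪ J) * pminor A (I ∩ J) ≤ pminor A I * pminor A J := by
  classical
  set S := (I ∩ J : Finset (Fin m)) with hS
  set X := (I \ J : Finset (Fin m)) with hX
  set Y := (J \ I : Finset (Fin m)) with hY
  set u : ({x // x ∈ S} ⊕ ({x // x ∈ X} ⊕ {x // x ∈ Y})) → Fin m :=
    Sum.elim (fun s => s.1) (Sum.elim (fun x => x.1) (fun y => y.1)) with hu
  have hmemS : ∀ s : {x // x ∈ S}, s.1 ∈ I ∧ s.1 ∈ J := fun s => Finset.mem_inter.1 s.2
  have hmemX : ∀ x : {x // x ∈ X}, x.1 ∈ I ∧ x.1 ∉ J := fun x => Finset.mem_sdiff.1 x.2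
  have hmemY : ∀ y : {x // x ∈ Y}, y.1 ∈ J ∧ y.1 ∉ I := fun y => Finset.mem_sdiff.1 y.2
  have hinj : Function.Injective u := by
    rintro (a | (a | a)) (b | (b | b)) hab <;>
      simp only [hu, Sum.elim_inl, Sum.elim_inr] at hab
    · exact congrArg Sum.inl (Subtype.ext hab)
    · exact absurd ((hmemS a).2) (hab ▸ (hmemX b).2)
    · exact absurd ((hmemS a).1) (hab ▸ (hmemY b).2)
    · exact absurd ((hmemS b).2) (hab ▸ (hmemX a).2)
    · exact congrArg (fun z => Sum.inr (Sum.inl z)) (Subtype.ext hab)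
    · exact absurd ((hmemX a).1) (hab ▸ (hmemY b).2)
    · exact absurd ((hmemS b).1) (hab ▸ (hmemY a).2)
    · exact absurd ((hmemX b).1) (hab ▸ (hmemY a).2)
    · exact congrArg (fun z => Sum.inr (Sum.inr z)) (Subtype.ext hab)
  set M := A.submatrix u u with hM
  have hMpd : M.PosDef := posDef_submatrix_inj hA hinj
  have hcore := core M hMpd
  -- identify the four determinants
  have e1 : pminor A (I ∪ J) = M.det := by
    refine pminor_eq_det A (I ∪ J) u hinj ?_ ?_
    · rintro (s | (x | y))
      · exact Finset.mem_union.2 (Or.inl (hmemS s).1)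
      · exact Finset.mem_union.2 (Or.inl (hmemX x).1)
      · exact Finset.mem_union.2 (Or.inr (hmemY y).1)
    · intro t ht
      by_cases htI : t ∈ I
      · by_cases htJ : t ∈ J
        · exact ⟨Sum.inl ⟨t, Finset.mem_inter.2 ⟨htI, htJ⟩⟩, rfl⟩
        · exact ⟨Sum.inr (Sum.inl ⟨t, Finset.mem_sdiff.2 ⟨htI, htJ⟩⟩), rfl⟩
      · have htJ : t ∈ J := (Finset.mem_union.1 ht).resolve_left htI
        exact ⟨Sum.inr (Sum.inr ⟨t, Finset.mem_sdiff.2 ⟨htJ, htI⟩⟩), rfl⟩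
  have e2 : pminor A (I ∩ J) = (M.submatrix Sum.inl Sum.inl).det := by
    rw [hM, Matrix.submatrix_submatrix]
    exact pminor_eq_det A (I ∩ J) _ (fun a b hab => Subtype.ext hab) (fun s => s.2)
      (fun t ht => ⟨⟨t, ht⟩, rfl⟩)
  have e3 : pminor A I = (M.submatrix (Sum.map id Sum.inl) (Sum.map id Sum.inl)).det := by
    rw [hM, Matrix.submatrix_submatrix]
    refine pminor_eq_det A I _ ?_ ?_ ?_
    · rintro (a | a) (b | b) hab <;>
        simp only [Function.comp, hu, Sum.map, Sum.elim_inl, Sum.elim_inr] at hab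
      · exact congrArg Sum.inl (Subtype.ext hab)
      · exact absurd ((hmemS a).2) (hab ▸ (hmemX b).2)
      · exact absurd ((hmemS b).2) (hab ▸ (hmemX a).2)
      · exact congrArg Sum.inr (Subtype.ext hab)
    · rintro (s | x)
      · exact (hmemS s).1
      · exact (hmemX x).1
    · intro t ht
      by_cases htJ : t ∈ J
      · exact ⟨Sum.inl ⟨t, Finset.mem_inter.2 ⟨ht, htJ⟩⟩, rfl⟩
      · exact ⟨Sum.inr ⟨t, Finset.mem_sdiff.2 ⟨ht, htJ⟩⟩, rfl⟩
  have e4 : pminor A J = (M.submatrix (Sum.map id Sum.inr) (Sum.map id Sum.inr)).det := by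
    rw [hM, Matrix.submatrix_submatrix]
    refine pminor_eq_det A J _ ?_ ?_ ?_
    · rintro (a | a) (b | b) hab <;>
        simp only [Function.comp, hu, Sum.map, Sum.elim_inl, Sum.elim_inr] at hab
      · exact congrArg Sum.inl (Subtype.ext hab)
      · exact absurd ((hmemS a).1) (hab ▸ (hmemY b).2)
      · exact absurd ((hmemS b).1) (hab ▸ (hmemY a).2)
      · exact congrArg Sum.inr (Subtype.ext hab)
    · rintro (s | y)
      · exact (hmemS s).2
      · exact (hmemY y).1
    · intro t ht
      by_cases htI : t ∈ I
      · exact ⟨Sum.inl ⟨t, Finset.mem_inter.2 ⟨htI, ht⟩⟩, rfl⟩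
      · exact ⟨Sum.inr ⟨t, Finset.mem_sdiff.2 ⟨ht, htI⟩⟩, rfl⟩
  rw [e1, e2, e3, e4]
  exact hcore


end AuxKoteljanskii

/-- Multiplicative submodularity (Hadamard–Fischer/Kotelyanskiĭ) of principal minors
of a positive semidefinite Hermitian matrix. -/
theorem det_principal_submodular {m : ℕ} (A : Matrix (Fin m) (Fin m) ℂ)
    (hA : A.PosSemidef) (I J : Finset (Fin m)) :
    pminor A (I ∪ J) * pminor A (I ∩ J) ≤ pminor A I * pminor A J := by
  classical
  set g : ℝ → Matrix (Fin m) (Fin m) ℂ := fun ε => A + (ε : ℂ) • 1 with hg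
  have hgc : Continuous g := by
    exact continuous_const.add ((Complex.continuous_ofReal).smul continuous_const)
  have hg0 : g 0 = A := by simp [hg]
  have hpd : ∀ ε : ℝ, 0 < ε → (g ε).PosDef := by
    intro ε hε
    have h1 : (ε : ℂ) • (1 : Matrix (Fin m) (Fin m) ℂ) =
        Matrix.diagonal (fun _ => (ε : ℂ)) := by
      ext i j
      by_cases hij : i = j <;> simp [Matrix.diagonal_apply, hij]
    show (A + (ε : ℂ) • 1).PosDef
    rw [h1]
    exact Matrix.PosDef.posSemidef_add hA (Matrix.PosDef.diagonal fun _ => Complex.zero_lt_real.2 hε)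
  have hpmc : ∀ K : Finset (Fin m), Continuous fun ε : ℝ => pminor (g ε) K := by
    intro K
    exact Continuous.matrix_det ((hgc.matrix_submatrix _ _))
  have hL : Filter.Tendsto (fun ε : ℝ => pminor (g ε) (I ∪ J) * pminor (g ε) (I ∩ J))
      (nhdsWithin 0 (Set.Ioi 0)) (nhds (pminor A (I ∪ J) * pminor A (I ∩ J))) := by
    have := ((hpmc (I ∪ J)).mul (hpmc (I ∩ J))).tendsto 0
    simp only [Pi.mul_apply, hg0] at this
    exact this.mono_left nhdsWithin_le_nhds
  have hR : Filter.Tendsto (fun ε : ℝ => pminor (g ε) I * pminor (g ε) J)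
      (nhdsWithin 0 (Set.Ioi 0)) (nhds (pminor A I * pminor A J)) := by
    have := ((hpmc I).mul (hpmc J)).tendsto 0
    simp only [Pi.mul_apply, hg0] at this
    exact this.mono_left nhdsWithin_le_nhds
  have hev : ∀ᶠ ε in nhdsWithin (0:ℝ) (Set.Ioi 0),
      pminor (g ε) (I ∪ J) * pminor (g ε) (I ∩ J) ≤ pminor (g ε) I * pminor (g ε) J := by
    filter_upwards [self_mem_nhdsWithin] with ε hε
    exact det_principal_submodular_posdef (g ε) (hpd ε hε) I J
  haveI : (nhdsWithin (0:ℝ) (Set.Ioi 0)).NeBot := nhdsGT_neBot 0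
  have hre : (pminor A (I ∪ J) * pminor A (I ∩ J)).re ≤ (pminor A I * pminor A J).re := by
    refine le_of_tendsto_of_tendsto ((Complex.continuous_re.tendsto _).comp hL)
      ((Complex.continuous_re.tendsto _).comp hR) ?_
    exact hev.mono fun ε h => (Complex.le_def.1 h).1
  have him : (pminor A (I ∪ J) * pminor A (I ∩ J)).im = (pminor A I * pminor A J).im := by
    refine tendsto_nhds_unique_of_eventuallyEq ((Complex.continuous_im.tendsto _).comp hL)
      ((Complex.continuous_im.tendsto _).comp hR) ?_
    exact hev.mono fun ε h => (Complex.le_def.1 h).2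
  exact Complex.le_def.2 ⟨hre, him⟩
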